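/- Fix the four generators a, b, c, d of FreeGroup (Fin 4). Let g : ℕ → ℕ be a computable function and let E = Set.range g, and suppose the predicate (· ∈ E) on ℕ is not a ComputablePred. Let R_E = { a^{-e} * b * a^{e} * (c^{-e} * d * c^{e})⁻¹ : e ∈ E } ⊆ FreeGroup (Fin 4). Then the word problem for the finitely generated, recursively presented group G_E = PresentedGroup R_E is unsolvable: the predicate on List (Fin 4 × Bool) asserting that the image of a word w in PresentedGroup R_E equals 1 is not a ComputablePred. -/

import Mathlib

namespace HigmanEncoding

/-- The first generator `a` of `FreeGroup (Fin 4)`. -/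
def a : FreeGroup (Fin 4) := FreeGroup.of 0
/-- The second generator `b` of `FreeGroup (Fin 4)`. -/
def b : FreeGroup (Fin 4) := FreeGroup.of 1
/-- The third generator `c` of `FreeGroup (Fin 4)`. -/
def c : FreeGroup (Fin 4) := FreeGroup.of 2
/-- The fourth generator `d` of `FreeGroup (Fin 4)`. -/
def d : FreeGroup (Fin 4) := FreeGroup.of 3

/-- The relator `a^{-e} b a^{e} (c^{-e} d c^{e})⁻¹`. -/
def rel (e : ℕ) : FreeGroup (Fin 4) :=
  a ^ (-(e : ℤ)) * b * a ^ (e : ℤ) * (c ^ (-(e : ℤ)) * d * c ^ (e : ℤ))⁻¹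

/-- The relator set `R_E = { a^{-e} b a^{e} (c^{-e} d c^{e})⁻¹ : e ∈ E }`. -/
def RE (E : Set ℕ) : Set (FreeGroup (Fin 4)) := {x | ∃ e ∈ E, x = rel e}

end HigmanEncoding

section Aux
open HigmanEncoding

open Finsupp Multiplicative SemidirectProduct

abbrev NN := Multiplicative (ℤ →₀ ℤ)

noncomputable def shiftAut (k : ℤ) : MulAut NN :=
  AddEquiv.toMultiplicative (Finsupp.domCongr (Equiv.addRight k))

lemma shiftAut_apply (k : ℤ) (f : ℤ →₀ ℤ) (z : ℤ) :
    toAdd (shiftAut k (ofAdd f)) z = f (z - k) := by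
  simp [shiftAut, Finsupp.domCongr, AddEquiv.toMultiplicative, sub_eq_add_neg]

noncomputable def chi : Multiplicative ℤ →* MulAut NN :=
  MonoidHom.mk' (fun k => shiftAut k.toAdd) (by
    intro x y
    ext f : 1
    refine Multiplicative.toAdd.injective (Finsupp.ext fun z => ?_)
    have h1 := shiftAut_apply (toAdd (x*y)) (toAdd f) z
    have h2 := shiftAut_apply (toAdd x) (toAdd (shiftAut (toAdd y) f)) z
    have h3 := shiftAut_apply (toAdd y) (toAdd f) (z - toAdd x)
    simp only [ofAdd_toAdd] at h1 h2 h3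
    rw [MulAut.mul_apply, h2, h3, h1]
    simp [sub_sub, add_comm])

lemma chi_apply_single (k : ℤ) :
    chi (ofAdd k) (ofAdd (Finsupp.single 0 1)) = ofAdd (Finsupp.single k 1) := by
  refine Multiplicative.toAdd.injective (Finsupp.ext fun z => ?_)
  rw [show chi (ofAdd k) = shiftAut k from rfl, shiftAut_apply]
  simp only [toAdd_ofAdd]
  rw [Finsupp.single_apply, Finsupp.single_apply]
  by_cases h : k = z <;> simp [h, sub_eq_zero, eq_comm]

abbrev LL := NN ⋊[chi] Multiplicative ℤ

/-- the generators of `F₂`. -/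
def xx : FreeGroup (Fin 2) := FreeGroup.of 0
def yy : FreeGroup (Fin 2) := FreeGroup.of 1

/-- `β e = x^{-e} y x^{e}`. -/
def beta (e : ℕ) : FreeGroup (Fin 2) := xx ^ (-(e:ℤ)) * yy * xx ^ (e:ℤ)

noncomputable def Psi : FreeGroup (Fin 2) →* LL :=
  FreeGroup.lift ![inr (ofAdd (1:ℤ)), inl (ofAdd (Finsupp.single (0:ℤ) (1:ℤ)))]

lemma Psi_xx_zpow (k : ℤ) : Psi (xx ^ k) = inr (ofAdd k) := by
  rw [map_zpow]
  have : Psi xx = inr (ofAdd (1:ℤ)) := by simp [Psi, xx]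
  rw [this, ← map_zpow]
  congr 1
  rw [← ofAdd_zsmul]
  simp

lemma Psi_beta (e : ℕ) :
    Psi (beta e) = inl (ofAdd (Finsupp.single (-(e:ℤ)) (1:ℤ))) := by
  have hy : Psi yy = inl (ofAdd (Finsupp.single (0:ℤ) (1:ℤ))) := by simp [Psi, yy]
  rw [beta, map_mul, map_mul, Psi_xx_zpow, Psi_xx_zpow, hy,
    show (ofAdd (e:ℤ)) = (ofAdd (-(e:ℤ)))⁻¹ by simp, ← inl_aut,
    chi_apply_single]

/-- The subgroup of the lamplighter group detecting support. -/
noncomputable def PP (E : Set ℕ) : Subgroup LL where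
  carrier := {g | g.right = 1 ∧ ∀ z : ℤ, toAdd g.left z ≠ 0 → ∃ e ∈ E, z = -(e:ℤ)}
  one_mem' := by
    refine ⟨rfl, fun z hz => absurd ?_ hz⟩
    simp [SemidirectProduct.one_left]
  mul_mem' := by
    rintro g h ⟨hg1, hg2⟩ ⟨hh1, hh2⟩
    refine ⟨by simp [SemidirectProduct.mul_right, hg1, hh1], fun z hz => ?_⟩
    rw [SemidirectProduct.mul_left, hg1, map_one] at hz
    simp only [MulAut.one_apply, toAdd_mul, Finsupp.add_apply] at hz
    by_cases h1 : toAdd g.left z = 0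
    · exact hh2 z (by simpa [h1] using hz)
    · exact hg2 z h1
  inv_mem' := by
    rintro g ⟨hg1, hg2⟩
    refine ⟨by simp [SemidirectProduct.inv_right, hg1], fun z hz => ?_⟩
    rw [SemidirectProduct.inv_left, hg1] at hz
    simp only [inv_one, map_one, MulAut.one_apply, toAdd_inv, Finsupp.neg_apply,
      ne_eq, neg_eq_zero] at hz
    exact hg2 z hz

/-- key lemma: if `β m` lies in the subgroup generated by `{β e : e ∈ E}`, then `m ∈ E`. -/
lemma beta_mem_closure {E : Set ℕ} {m : ℕ}
    (h : beta m ∈ Subgroup.closure {w | ∃ e ∈ E, w = beta e}) : m ∈ E := by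
  have hmap : Psi (beta m) ∈ Subgroup.map Psi
      (Subgroup.closure {w | ∃ e ∈ E, w = beta e}) :=
    Subgroup.mem_map_of_mem _ h
  rw [MonoidHom.map_closure] at hmap
  have hle : Subgroup.closure (Psi '' {w | ∃ e ∈ E, w = beta e}) ≤ PP E := by
    rw [Subgroup.closure_le]
    rintro _ ⟨w, ⟨e, he, rfl⟩, rfl⟩
    rw [Psi_beta]
    refine ⟨rfl, fun z hz => ⟨e, he, ?_⟩⟩
    simp only [SemidirectProduct.left_inl, toAdd_ofAdd] at hz
    rw [Finsupp.single_apply] at hz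
    by_contra hne
    exact hz (if_neg (by omega))
  have hP := hle hmap
  rw [Psi_beta] at hP
  obtain ⟨-, hsupp⟩ := hP
  obtain ⟨e, he, hze⟩ := hsupp (-(m:ℤ)) (by simp)
  have : m = e := by omega
  subst this; exact he

open Monoid

def SS (E : Set ℕ) : Set (FreeGroup (Fin 2)) := {w | ∃ e ∈ E, w = beta e}

def KK (E : Set ℕ) : Subgroup (FreeGroup (Fin 2)) := Subgroup.closure (SS E)

def phiE (E : Set ℕ) : ∀ _ : Bool, (KK E) →* FreeGroup (Fin 2) := fun _ => (KK E).subtype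

lemma phiE_inj (E : Set ℕ) : ∀ i, Function.Injective (phiE E i) :=
  fun _ => Subgroup.subtype_injective _

open HigmanEncoding

/-- The map from the free group on 4 generators to the amalgam. -/
noncomputable def Phi (E : Set ℕ) : FreeGroup (Fin 4) →* PushoutI (phiE E) :=
  FreeGroup.lift ![PushoutI.of true xx, PushoutI.of true yy,
                   PushoutI.of false xx, PushoutI.of false yy]

lemma Phi_rel (E : Set ℕ) (e : ℕ) :
    Phi E (rel e) = PushoutI.of (φ := phiE E) true (beta e) *
      (PushoutI.of (φ := phiE E) false (beta e))⁻¹ := by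
  simp only [rel, beta, map_mul, map_zpow, map_inv, mul_inv_rev]
  simp only [Phi, a, b, c, d, FreeGroup.lift_apply_of]
  simp only [Matrix.cons_val_zero, Matrix.cons_val_one, Matrix.head_cons,
    Matrix.cons_val_two, Matrix.tail_cons, Matrix.cons_val_three]

lemma rel_mem_iff (E : Set ℕ) (m : ℕ) :
    rel m ∈ Subgroup.normalClosure (RE E) ↔ m ∈ E := by
  constructor
  · intro h
    have hker : Subgroup.normalClosure (RE E) ≤ (Phi E).ker := by
      apply Subgroup.normalClosure_le_normal
      rintro _ ⟨e, he, rfl⟩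
      have hbe : beta e ∈ KK E := Subgroup.subset_closure ⟨e, he, rfl⟩
      have h1 : PushoutI.of (φ := phiE E) true (beta e) =
          PushoutI.of (φ := phiE E) false (beta e) := by
        have t1 := PushoutI.of_apply_eq_base (phiE E) true ⟨beta e, hbe⟩
        have t2 := PushoutI.of_apply_eq_base (phiE E) false ⟨beta e, hbe⟩
        exact t1.trans t2.symm
      simp only [SetLike.mem_coe, MonoidHom.mem_ker, Phi_rel, h1, mul_inv_cancel]
    have := hker h
    rw [MonoidHom.mem_ker, Phi_rel, mul_inv_eq_one] at this
    have hmem : PushoutI.of (φ := phiE E) true (beta m) ∈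
        (PushoutI.of (φ := phiE E) true).range ⊓ (PushoutI.of (φ := phiE E) false).range := by
      exact ⟨⟨beta m, rfl⟩, ⟨beta m, this.symm⟩⟩
    rw [PushoutI.inf_of_range_eq_base_range (phiE_inj E) (by simp : (true:Bool) ≠ false)]
      at hmem
    obtain ⟨k, hk⟩ := hmem
    have : PushoutI.of (φ := phiE E) true ((phiE E true) k) =
        PushoutI.of (φ := phiE E) true (beta m) := by
      rw [PushoutI.of_apply_eq_base, hk]
    have := PushoutI.of_injective (phiE_inj E) true this
    have hbm : beta m ∈ KK E := by
      rw [← this]; simp [phiE]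
    exact beta_mem_closure hbm
  · intro h
    exact Subgroup.subset_normalClosure ⟨m, h, rfl⟩

/-- The explicit word for `rel m`. -/
def relWord (m : ℕ) : List (Fin 4 × Bool) :=
  List.replicate m (0, false) ++ ([(1, true)] ++ (List.replicate m (0, true) ++
    (List.replicate m (2, false) ++ ([(3, false)] ++ List.replicate m (2, true)))))

lemma mk_replicate (i : Fin 4) (bb : Bool) (m : ℕ) :
    FreeGroup.mk (List.replicate m (i, bb)) = (FreeGroup.mk [(i, bb)]) ^ m := by
  induction m with
  | zero => rfl
  | succ n ih =>
    rw [List.replicate_succ, pow_succ', ← ih, show ((i,bb) :: List.replicate n (i,bb))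
      = [(i,bb)] ++ List.replicate n (i,bb) from rfl, ← FreeGroup.mul_mk]

lemma mk_single_true (i : Fin 4) : FreeGroup.mk [(i, true)] = FreeGroup.of i := rfl

lemma mk_single_false (i : Fin 4) : FreeGroup.mk [(i, false)] = (FreeGroup.of i)⁻¹ := by
  rw [show FreeGroup.of i = FreeGroup.mk [(i, true)] from rfl, FreeGroup.inv_mk]
  rfl

lemma mk_relWord (m : ℕ) : FreeGroup.mk (relWord m) = rel m := by
  simp only [relWord, ← FreeGroup.mul_mk, mk_replicate, mk_single_true, mk_single_false]
  rw [rel]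
  show ((FreeGroup.of 0)⁻¹)^m * ((FreeGroup.of 1) * ((FreeGroup.of 0)^m *
    (((FreeGroup.of 2)⁻¹)^m * ((FreeGroup.of 3)⁻¹ * (FreeGroup.of 2)^m)))) = _
  rw [a, b, c, d]
  group

lemma prim_replicate (x : Fin 4 × Bool) : Primrec (fun m => List.replicate m x) := by
  have : Primrec fun m => (List.range m).map (fun _ => x) :=
    Primrec.list_map Primrec.list_range (Primrec₂.const x)
  refine this.of_eq fun m => ?_
  induction m with
  | zero => rfl
  | succ n ih => rw [List.range_succ, List.map_append, ih, List.replicate_succ']; rfl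

lemma prim_relWord : Primrec relWord := by
  unfold relWord
  exact Primrec.list_append.comp (prim_replicate _) (Primrec.list_append.comp
    (Primrec.const _) (Primrec.list_append.comp (prim_replicate _)
      (Primrec.list_append.comp (prim_replicate _) (Primrec.list_append.comp
        (Primrec.const _) (prim_replicate _)))))


end Aux

open HigmanEncoding in
/-- If `E` is the range of a computable function but membership in `E` is undecidable, then
the recursively presented group `G_E = PresentedGroup (R_E)` has unsolvable word problem. -/
theorem higman_encoding_word_problem_unsolvable (g : ℕ → ℕ) (hg : Computable g)
    (hE : ¬ ComputablePred fun m : ℕ => m ∈ Set.range g) :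
    ¬ ComputablePred fun w : List (Fin 4 × Bool) =>
      (QuotientGroup.mk (FreeGroup.mk w) : PresentedGroup (RE (Set.range g))) = 1 := by
  intro hWP
  obtain ⟨f, hf, hfeq⟩ := ComputablePred.computable_iff.mp hWP
  apply hE
  rw [ComputablePred.computable_iff]
  refine ⟨fun m => f (relWord m), hf.comp prim_relWord.to_comp, funext fun m => propext ?_⟩
  have h1 : ((QuotientGroup.mk (FreeGroup.mk (relWord m)) :
      PresentedGroup (RE (Set.range g))) = 1) ↔ m ∈ Set.range g := by
    rw [mk_relWord m]
    exact (QuotientGroup.eq_one_iff (rel m)).trans (rel_mem_iff _ m)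
  exact h1.symm.trans (iff_of_eq (congrFun hfeq (relWord m)))
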